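/- For each h > 0 there exists exactly one function u that solves BVP(h); that is, there exists a twice continuously differentiable u : [0,1] → ℝ with (κ/h²)·u''(y) = r(u(y)) for all y ∈ [0,1], u'(0) = 0 and u(1) + (L·κ/(κ_L·h))·u'(1) = c_*, and any two such functions coincide on [0,1]. -/

import Mathlib

open Set MeasureTheory intervalIntegral Filter

/-- `u` (with derivative `u'` and second derivative `u''`) solves the boundary value
problem BVP(h): `(κ/h²)·u'' = r(u)` on `[0,1]`, `u'(0) = 0`,
`u(1) + (L·κ/(κ_L·h))·u'(1) = c_*`. -/
def SolvesBVP (κ κL L cstar : ℝ) (r : ℝ → ℝ) (h : ℝ)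
    (u u' u'' : ℝ → ℝ) : Prop :=
  (∀ y ∈ Icc (0:ℝ) 1, HasDerivWithinAt u (u' y) (Icc (0:ℝ) 1) y) ∧
  (∀ y ∈ Icc (0:ℝ) 1, HasDerivWithinAt u' (u'' y) (Icc (0:ℝ) 1) y) ∧
  ContinuousOn u'' (Icc (0:ℝ) 1) ∧
  (∀ y ∈ Icc (0:ℝ) 1, (κ / h ^ 2) * u'' y = r (u y)) ∧
  u' 0 = 0 ∧
  u 1 + (L * κ / (κL * h)) * u' 1 = cstar

/-- Uniqueness for BVP(h), via an energy/monotonicity argument on `W = w·w'`. -/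
lemma bvp_uniq {κ κL L cstar h : ℝ} (hκ : 0 < κ) (hκL : 0 < κL) (hL : 0 < L) (hh : 0 < h)
    {r : ℝ → ℝ} (hmono : Monotone r)
    {u₁ u₁' u₁'' u₂ u₂' u₂'' : ℝ → ℝ}
    (h₁ : SolvesBVP κ κL L cstar r h u₁ u₁' u₁'')
    (h₂ : SolvesBVP κ κL L cstar r h u₂ u₂' u₂'') :
    EqOn u₁ u₂ (Icc (0:ℝ) 1) := by
  obtain ⟨hd₁, hd₁', _, heq₁, hb₁0, hb₁1⟩ := h₁
  obtain ⟨hd₂, hd₂', _, heq₂, hb₂0, hb₂1⟩ := h₂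
  set c := L * κ / (κL * h) with hcdef
  have hcpos : 0 < c := by positivity
  set w : ℝ → ℝ := fun y => u₁ y - u₂ y with hwdef
  set w' : ℝ → ℝ := fun y => u₁' y - u₂' y with hw'def
  set w'' : ℝ → ℝ := fun y => u₁'' y - u₂'' y with hw''def
  have hdw : ∀ y ∈ Icc (0:ℝ) 1, HasDerivWithinAt w (w' y) (Icc (0:ℝ) 1) y :=
    fun y hy => (hd₁ y hy).sub (hd₂ y hy)
  have hdw' : ∀ y ∈ Icc (0:ℝ) 1, HasDerivWithinAt w' (w'' y) (Icc (0:ℝ) 1) y :=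
    fun y hy => (hd₁' y hy).sub (hd₂' y hy)
  have hkh : 0 < κ / h ^ 2 := by positivity
  have hsign : ∀ y ∈ Icc (0:ℝ) 1, 0 ≤ w y * w'' y := by
    intro y hy
    have e : (κ / h ^ 2) * w'' y = r (u₁ y) - r (u₂ y) := by
      simp only [hw''def, mul_sub, heq₁ y hy, heq₂ y hy]
    have key : 0 ≤ w y * (r (u₁ y) - r (u₂ y)) := by
      rcases le_total (u₁ y) (u₂ y) with hle | hle
      · have h1 : r (u₁ y) ≤ r (u₂ y) := hmono hle
        have h2 : w y ≤ 0 := sub_nonpos.2 hle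
        nlinarith
      · have h1 : r (u₂ y) ≤ r (u₁ y) := hmono hle
        have h2 : 0 ≤ w y := sub_nonneg.2 hle
        nlinarith
    have : (κ / h ^ 2) * 0 ≤ (κ / h ^ 2) * (w y * w'' y) := by
      calc (κ / h ^ 2) * 0 = 0 := mul_zero _
        _ ≤ w y * (r (u₁ y) - r (u₂ y)) := key
        _ = (κ / h ^ 2) * (w y * w'' y) := by rw [← e]; ring
    exact le_of_mul_le_mul_left this hkh
  set W : ℝ → ℝ := fun y => w y * w' y with hWdef
  have hdW : ∀ y ∈ Icc (0:ℝ) 1,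
      HasDerivWithinAt W (w' y * w' y + w y * w'' y) (Icc (0:ℝ) 1) y :=
    fun y hy => (hdw y hy).mul (hdw' y hy)
  have hWcont : ContinuousOn W (Icc (0:ℝ) 1) := fun y hy => (hdW y hy).continuousWithinAt
  have hWmono : MonotoneOn W (Icc (0:ℝ) 1) := by
    apply monotoneOn_of_hasDerivWithinAt_nonneg (convex_Icc 0 1) hWcont
      (f' := fun y => w' y * w' y + w y * w'' y)
    · intro y hy
      rw [interior_Icc] at hy
      rw [interior_Icc]
      exact (hdW y (Ioo_subset_Icc_self hy)).mono Ioo_subset_Icc_self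
    · intro y hy
      rw [interior_Icc] at hy
      have := hsign y (Ioo_subset_Icc_self hy)
      nlinarith [sq_nonneg (w' y)]
  have hw'0 : w' 0 = 0 := by simp [hw'def, hb₁0, hb₂0]
  have hW0 : W 0 = 0 := by simp [hWdef, hw'0]
  have hw1 : w 1 = -(c * w' 1) := by
    simp only [hwdef, hw'def]
    linarith
  have hW1 : W 1 ≤ 0 := by
    have : W 1 = -(c * (w' 1 * w' 1)) := by rw [hWdef]; simp only [hw1]; ring
    nlinarith [mul_self_nonneg (w' 1)]
  have hWzero : ∀ y ∈ Icc (0:ℝ) 1, W y = 0 := by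
    intro y hy
    have h1 := hWmono (left_mem_Icc.2 zero_le_one) hy hy.1
    have h2 := hWmono hy (right_mem_Icc.2 zero_le_one) hy.2
    rw [hW0] at h1
    linarith
  have hderiv0 : ∀ y ∈ Icc (0:ℝ) 1, w' y = 0 := by
    intro y hy
    have hud : UniqueDiffWithinAt ℝ (Icc (0:ℝ) 1) y :=
      uniqueDiffOn_Icc (by norm_num) y hy
    have hz : HasDerivWithinAt W 0 (Icc (0:ℝ) 1) y :=
      (hasDerivWithinAt_const y (Icc (0:ℝ) 1) (0:ℝ)).congr
        (fun z hz => (hWzero z hz)) (hWzero y hy)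
    have e1 := (hdW y hy).derivWithin hud
    have e2 := hz.derivWithin hud
    have e3 : w' y * w' y + w y * w'' y = 0 := by rw [← e1, e2]
    nlinarith [hsign y hy]
  have hwcont : ContinuousOn w (Icc (0:ℝ) 1) := fun y hy => (hdw y hy).continuousWithinAt
  have hwIci : ∀ x ∈ Ico (0:ℝ) 1, HasDerivWithinAt w 0 (Ici x) x := by
    intro x hx
    have h1 : HasDerivWithinAt w (w' x) (Icc (0:ℝ) 1) x := hdw x ⟨hx.1, hx.2.le⟩
    rw [hderiv0 x ⟨hx.1, hx.2.le⟩] at h1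
    apply h1.mono_of_mem_nhdsWithin
    filter_upwards [nhdsWithin_le_nhds (Iio_mem_nhds hx.2), self_mem_nhdsWithin] with z h1 h2
    exact ⟨hx.1.trans h2, h1.le⟩
  have hwconst := constant_of_has_deriv_right_zero hwcont hwIci
  have hw'1 : w' 1 = 0 := hderiv0 1 (right_mem_Icc.2 zero_le_one)
  have hw1' : w 1 = 0 := by rw [hw1, hw'1]; ring
  have hw0 : w 0 = 0 := by
    have := hwconst 1 (right_mem_Icc.2 zero_le_one)
    linarith [hw1']
  intro y hy
  have := hwconst y hy
  have : w y = 0 := by rw [this, hw0]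
  simpa [hwdef, sub_eq_zero] using this


/-- Existence for BVP(h), via Picard–Lindelöf for a clamped vector field and a shooting
argument using Grönwall's inequality and the intermediate value theorem. -/
lemma bvp_exists {κ κL L cstar h : ℝ} (hκ : 0 < κ) (hκL : 0 < κL) (hL : 0 < L)
    (hc : 0 < cstar) (hh : 0 < h)
    {r : ℝ → ℝ} (hr : ContDiff ℝ 1 r) (hrsign : ∀ s : ℝ, s ≠ 0 → s * r s > 0)
    (hr' : ∀ s : ℝ, 0 ≤ deriv r s) :
    ∃ u u' u'' : ℝ → ℝ, SolvesBVP κ κL L cstar r h u u' u'' := by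
  have hmono : Monotone r := monotone_of_deriv_nonneg (hr.differentiable one_ne_zero) hr'
  have hrpos : ∀ s : ℝ, 0 < s → 0 < r s := fun s hs => by nlinarith [hrsign s hs.ne']
  have hrneg : ∀ s : ℝ, s < 0 → r s < 0 := fun s hs => by nlinarith [hrsign s hs.ne]
  have hr0 : r 0 = 0 := by
    have hp : 0 ≤ r 0 := by
      have ht : Filter.Tendsto r (nhdsWithin 0 (Ioi 0)) (nhds (r 0)) :=
        (hr.continuous.tendsto 0).mono_left nhdsWithin_le_nhds
      refine ge_of_tendsto ht ?_
      filter_upwards [self_mem_nhdsWithin] with s hs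
      exact (hrpos s hs).le
    have hn : r 0 ≤ 0 := by
      have ht : Filter.Tendsto r (nhdsWithin 0 (Iio 0)) (nhds (r 0)) :=
        (hr.continuous.tendsto 0).mono_left nhdsWithin_le_nhds
      refine le_of_tendsto ht ?_
      filter_upwards [self_mem_nhdsWithin] with s hs
      exact (hrneg s hs).le
    linarith
  set c := L * κ / (κL * h) with hcdef
  have hcpos : 0 < c := by positivity
  -- the clamped field
  set clampf : ℝ → ℝ := fun x => max 0 (min x cstar) with hclampdef
  have hclamp_mem : ∀ x, clampf x ∈ Icc (0:ℝ) cstar :=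
    fun x => ⟨le_max_left _ _, max_le hc.le (min_le_right _ _)⟩
  have hclamp_eq : ∀ x ∈ Icc (0:ℝ) cstar, clampf x = x := by
    intro x hx
    simp only [hclampdef]
    rw [min_eq_left hx.2, max_eq_right hx.1]
  have hclamp_lip : ∀ x y : ℝ, dist (clampf x) (clampf y) ≤ dist x y := by
    intro x y
    simp only [hclampdef, Real.dist_eq]
    have l1 := abs_max_sub_max_le_max (0:ℝ) (min x cstar) 0 (min y cstar)
    rw [sub_self, abs_zero, max_eq_right (abs_nonneg (x ⊓ cstar - y ⊓ cstar))] at l1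
    have l2 := abs_min_sub_min_le_max x cstar y cstar
    rw [sub_self, abs_zero, max_eq_left (abs_nonneg (x - y))] at l2
    exact l1.trans l2
  -- Lipschitz constant for r on [0, cstar]
  obtain ⟨M, hM⟩ :=
    isCompact_Icc.exists_bound_of_continuousOn
      ((hr.continuous_deriv le_rfl).continuousOn (s := Icc (0:ℝ) cstar))
  have hrlip : LipschitzOnWith (Real.toNNReal M) r (Icc (0:ℝ) cstar) := by
    refine Convex.lipschitzOnWith_of_nnnorm_deriv_le
      (fun x _ => (hr.differentiable one_ne_zero).differentiableAt) ?_ (convex_Icc _ _)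
    intro x hx
    rw [← NNReal.coe_le_coe, coe_nnnorm, Real.coe_toNNReal']
    exact (hM x hx).trans (le_max_left _ _)
  set g : ℝ → ℝ := fun x => h ^ 2 / κ * r (clampf x) with hgdef
  have hgl : ∀ x y : ℝ, dist (g x) (g y) ≤ (h ^ 2 / κ * Real.toNNReal M) * dist x y := by
    intro x y
    simp only [hgdef, Real.dist_eq, ← mul_sub, abs_mul, abs_of_pos (show (0:ℝ) < h ^ 2 / κ by positivity)]
    rw [mul_assoc]
    refine mul_le_mul_of_nonneg_left ?_ (by positivity)
    have := hrlip.dist_le_mul _ (hclamp_mem x) _ (hclamp_mem y)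
    rw [Real.dist_eq, Real.dist_eq] at this
    refine this.trans ?_
    refine mul_le_mul_of_nonneg_left ?_ (Real.toNNReal M).2
    have := hclamp_lip x y
    rwa [Real.dist_eq, Real.dist_eq] at this
  have hglip : LipschitzWith (Real.toNNReal (h ^ 2 / κ) * Real.toNNReal M) g := by
    refine LipschitzWith.of_dist_le_mul fun x y => ?_
    refine (hgl x y).trans ?_
    have hco : ((((h ^ 2 / κ).toNNReal * M.toNNReal) : NNReal) : ℝ)
        = h ^ 2 / κ * (M.toNNReal : ℝ) := by
      rw [NNReal.coe_mul, Real.coe_toNNReal (h ^ 2 / κ) (by positivity)]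
    rw [hco]
  have hgcont : Continuous g := hglip.continuous
  set F : ℝ × ℝ → ℝ × ℝ := fun v => (v.2, g v.1) with hFdef
  obtain ⟨KF, hFlip⟩ : ∃ K : NNReal, LipschitzWith K F :=
    ⟨_, (LipschitzWith.prod_snd).prodMk (hglip.comp LipschitzWith.prod_fst)⟩
  -- bounds on g
  set C0 : ℝ := h ^ 2 / κ * r cstar with hC0def
  have hC0pos : 0 < C0 := by
    have := hrpos cstar hc
    positivity
  have hgmem : ∀ x, g x ∈ Icc (0:ℝ) C0 := by
    intro x
    have h1 : 0 ≤ r (clampf x) := hr0 ▸ hmono (hclamp_mem x).1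
    have h2 : r (clampf x) ≤ r cstar := hmono (hclamp_mem x).2
    constructor
    · exact mul_nonneg (by positivity) h1
    · exact mul_le_mul_of_nonneg_left h2 (by positivity)
  -- Picard–Lindelöf solutions on [0,1] for each initial value (a, 0)
  have hPL : ∀ a : ℝ, ∃ f : ℝ → ℝ × ℝ, f 0 = (a, 0) ∧
      ∀ t ∈ Icc (0:ℝ) 1, HasDerivWithinAt f (F (f t)) (Icc (0:ℝ) 1) t := by
    intro a
    have hpl : IsPicardLindelof (fun _ x => F x) (⟨0, ⟨le_refl _, zero_le_one⟩⟩ : Icc (0:ℝ) 1)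
        (a, 0) (⟨C0 + 1, by positivity⟩ : NNReal) 0 (⟨C0 + 1, by positivity⟩ : NNReal) KF :=
      { lipschitzOnWith := fun t _ => hFlip.lipschitzOnWith
        continuousOn := fun x _ => continuousOn_const
        norm_le := by
          intro t _ x hx
          have h2 : ‖x.2‖ ≤ C0 + 1 := by
            have hb := mem_closedBall_iff_norm.1 hx
            calc ‖x.2‖ = ‖(x - (a, (0:ℝ))).2‖ := by simp
              _ ≤ ‖x - (a, (0:ℝ))‖ := norm_snd_le _
              _ ≤ C0 + 1 := hb
          have h1 : ‖g x.1‖ ≤ C0 + 1 := by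
            have := hgmem x.1
            rw [Real.norm_eq_abs, abs_of_nonneg this.1]
            linarith [this.2]
          calc ‖F x‖ = max ‖x.2‖ ‖g x.1‖ := rfl
            _ ≤ C0 + 1 := max_le h2 h1
        mul_max_le := by simp }
    exact hpl.exists_eq_forall_mem_Icc_hasDerivWithinAt₀
  choose sol hsol0 hsolD using hPL
  have hsolC : ∀ a, ContinuousOn (sol a) (Icc (0:ℝ) 1) :=
    fun a y hy => (hsolD a y hy).continuousWithinAt
  have hsolIci : ∀ a, ∀ t ∈ Ico (0:ℝ) 1, HasDerivWithinAt (sol a) (F (sol a t)) (Ici t) t := by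
    intro a t ht
    refine (hsolD a t ⟨ht.1, ht.2.le⟩).mono_of_mem_nhdsWithin ?_
    filter_upwards [nhdsWithin_le_nhds (Iio_mem_nhds ht.2), self_mem_nhdsWithin] with z h1 h2
    exact ⟨ht.1.trans h2, h1.le⟩
  -- component derivatives
  have hfst : ∀ a, ∀ y ∈ Icc (0:ℝ) 1,
      HasDerivWithinAt (fun t => (sol a t).1) ((sol a y).2) (Icc (0:ℝ) 1) y := by
    intro a y hy
    have := (ContinuousLinearMap.fst ℝ ℝ ℝ).hasFDerivAt.comp_hasDerivWithinAt y (hsolD a y hy)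
    simpa [hFdef, Function.comp_def] using this
  have hsnd : ∀ a, ∀ y ∈ Icc (0:ℝ) 1,
      HasDerivWithinAt (fun t => (sol a t).2) (g ((sol a y).1)) (Icc (0:ℝ) 1) y := by
    intro a y hy
    have := (ContinuousLinearMap.snd ℝ ℝ ℝ).hasFDerivAt.comp_hasDerivWithinAt y (hsolD a y hy)
    simpa [hFdef, Function.comp_def] using this
  -- monotonicity of the momentum and of the position
  have hp_mono : ∀ a, MonotoneOn (fun y => (sol a y).2) (Icc (0:ℝ) 1) := by
    intro a
    refine monotoneOn_of_hasDerivWithinAt_nonneg (convex_Icc 0 1)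
      (fun y hy => ((hsnd a y hy).continuousWithinAt))
      (f' := fun y => g ((sol a y).1)) ?_ ?_
    · intro y hy
      rw [interior_Icc] at hy ⊢
      exact (hsnd a y (Ioo_subset_Icc_self hy)).mono Ioo_subset_Icc_self
    · intro y _
      exact (hgmem _).1
  have hp_nonneg : ∀ a, ∀ y ∈ Icc (0:ℝ) 1, 0 ≤ (sol a y).2 := by
    intro a y hy
    have := hp_mono a (left_mem_Icc.2 zero_le_one) hy hy.1
    simpa [hsol0 a] using this
  have hx_mono : ∀ a, MonotoneOn (fun y => (sol a y).1) (Icc (0:ℝ) 1) := by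
    intro a
    refine monotoneOn_of_hasDerivWithinAt_nonneg (convex_Icc 0 1)
      (fun y hy => ((hfst a y hy).continuousWithinAt))
      (f' := fun y => (sol a y).2) ?_ ?_
    · intro y hy
      rw [interior_Icc] at hy ⊢
      exact (hfst a y (Ioo_subset_Icc_self hy)).mono Ioo_subset_Icc_self
    · intro y hy
      rw [interior_Icc] at hy
      exact hp_nonneg a y (Ioo_subset_Icc_self hy)
  -- the shooting map
  set Φ : ℝ → ℝ := fun a => (sol a 1).1 + c * (sol a 1).2 with hΦdef
  have hΦlip : ∀ a b : ℝ, dist (Φ a) (Φ b) ≤ ((1 + c) * Real.exp KF) * dist a b := by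
    intro a b
    have hd := dist_le_of_trajectories_ODE (v := fun _ x => F x) (K := KF)
      (fun _ => hFlip) (hsolC a) (hsolIci a) (hsolC b) (hsolIci b)
      (δ := dist a b) (by rw [hsol0 a, hsol0 b, Prod.dist_eq]; simp [dist_nonneg]) 1
      (right_mem_Icc.2 zero_le_one)
    rw [sub_zero, mul_one] at hd
    have h1 : dist ((sol a 1).1) ((sol b 1).1) ≤ dist (sol a 1) (sol b 1) := by
      rw [Prod.dist_eq]; exact le_max_left _ _
    have h2 : dist ((sol a 1).2) ((sol b 1).2) ≤ dist (sol a 1) (sol b 1) := by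
      rw [Prod.dist_eq]; exact le_max_right _ _
    rw [Real.dist_eq] at h1 h2 ⊢
    have habs : |Φ a - Φ b| ≤ |(sol a 1).1 - (sol b 1).1| + c * |(sol a 1).2 - (sol b 1).2| := by
      simp only [hΦdef]
      have : (sol a 1).1 + c * (sol a 1).2 - ((sol b 1).1 + c * (sol b 1).2)
          = ((sol a 1).1 - (sol b 1).1) + c * ((sol a 1).2 - (sol b 1).2) := by ring
      rw [this]
      refine (abs_add_le _ _).trans ?_
      rw [abs_mul, abs_of_pos hcpos]
    have hdd : (0:ℝ) ≤ dist (sol a 1) (sol b 1) := dist_nonneg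
    have hexp : (0:ℝ) < Real.exp KF := Real.exp_pos _
    have h0ab : (0:ℝ) ≤ dist a b := dist_nonneg
    nlinarith [mul_le_mul_of_nonneg_left h2 hcpos.le,
      mul_le_mul_of_nonneg_left hd (by positivity : (0:ℝ) ≤ 1 + c)]
  have hΦc : ContinuousOn Φ (Icc 0 cstar) := by
    have : LipschitzWith (Real.toNNReal ((1 + c) * Real.exp KF)) Φ := by
      refine LipschitzWith.of_dist_le_mul fun a b => (hΦlip a b).trans ?_
      rw [Real.coe_toNNReal _ (by positivity)]
    exact this.continuous.continuousOn
  have hΦ0 : Φ 0 = 0 := by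
    have hcl0 : clampf 0 = 0 := hclamp_eq 0 ⟨le_refl _, hc.le⟩
    have hg0 : g (0:ℝ) = 0 := by simp [hgdef, hcl0, hr0]
    have hF0 : F (0 : ℝ × ℝ) = 0 := by
      simp [hFdef, Prod.ext_iff, hg0]
    have hz : EqOn (sol 0) (fun _ => (0 : ℝ × ℝ)) (Icc (0:ℝ) 1) := by
      refine ODE_solution_unique (v := fun _ x => F x) (fun _ => hFlip)
        (hsolC 0) (hsolIci 0) continuousOn_const ?_ ?_
      · intro t _
        have hz0 := hasDerivWithinAt_const (𝕜 := ℝ) t (Ici t) (0 : ℝ × ℝ)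
        simpa [hF0] using hz0
      · rw [hsol0 0, Prod.mk_zero_zero]
    have h1 := hz (right_mem_Icc.2 zero_le_one)
    simp [hΦdef, h1]
  have hΦcstar : cstar ≤ Φ cstar := by
    have h1 : cstar ≤ (sol cstar 1).1 := by
      have := hx_mono cstar (left_mem_Icc.2 zero_le_one) (right_mem_Icc.2 zero_le_one)
        zero_le_one
      simpa [hsol0 cstar] using this
    have h2 := hp_nonneg cstar 1 (right_mem_Icc.2 zero_le_one)
    have := mul_nonneg hcpos.le h2
    simp only [hΦdef]
    linarith
  obtain ⟨a, ha_mem, ha⟩ : ∃ a ∈ Icc (0:ℝ) cstar, Φ a = cstar := by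
    have hsub := intermediate_value_Icc hc.le hΦc
    have : cstar ∈ Φ '' Icc 0 cstar := hsub ⟨by rw [hΦ0]; exact hc.le, hΦcstar⟩
    obtain ⟨a, ha1, ha2⟩ := this
    exact ⟨a, ha1, ha2⟩
  -- a priori bounds for the chosen trajectory
  have hp1 := hp_nonneg a 1 (right_mem_Icc.2 zero_le_one)
  have hx1 : (sol a 1).1 ≤ cstar := by
    have := mul_nonneg hcpos.le hp1
    simp only [hΦdef] at ha
    linarith
  have hx01 : ∀ y ∈ Icc (0:ℝ) 1, (sol a y).1 ∈ Icc (0:ℝ) cstar := by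
    intro y hy
    have hxge : a ≤ (sol a y).1 := by
      have := hx_mono a (left_mem_Icc.2 zero_le_one) hy hy.1
      simpa [hsol0 a] using this
    have hxle : (sol a y).1 ≤ (sol a 1).1 :=
      hx_mono a hy (right_mem_Icc.2 zero_le_one) hy.2
    exact ⟨ha_mem.1.trans hxge, hxle.trans hx1⟩
  refine ⟨fun y => (sol a y).1, fun y => (sol a y).2, fun y => g ((sol a y).1),
    hfst a, hsnd a, ?_, ?_, ?_, ?_⟩
  · exact hgcont.comp_continuousOn (continuous_fst.comp_continuousOn (hsolC a))
  · intro y hy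
    have hcl : clampf ((sol a y).1) = (sol a y).1 := hclamp_eq _ (hx01 y hy)
    show κ / h ^ 2 * (h ^ 2 / κ * r (clampf ((sol a y).1))) = r ((sol a y).1)
    rw [hcl, ← mul_assoc]
    have hone : κ / h ^ 2 * (h ^ 2 / κ) = 1 := by
      field_simp
    rw [hone, one_mul]
  · simp [hsol0 a]
  · rw [← hcdef]
    simp only [hΦdef] at ha
    exact ha

theorem existence_uniqueness_BVP
    (κ κL L cstar : ℝ) (hκ : 0 < κ) (hκL : 0 < κL) (hL : 0 < L) (hc : 0 < cstar)
    (r : ℝ → ℝ) (hr : ContDiff ℝ 1 r) (hrsign : ∀ s : ℝ, s ≠ 0 → s * r s > 0)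
    (hr' : ∀ s : ℝ, 0 ≤ deriv r s)
    (h : ℝ) (hh : 0 < h) :
    (∃ u u' u'' : ℝ → ℝ, SolvesBVP κ κL L cstar r h u u' u'') ∧
    (∀ u₁ u₁' u₁'' u₂ u₂' u₂'' : ℝ → ℝ,
      SolvesBVP κ κL L cstar r h u₁ u₁' u₁'' →
      SolvesBVP κ κL L cstar r h u₂ u₂' u₂'' →
      EqOn u₁ u₂ (Icc (0:ℝ) 1)) := by
  have hmono : Monotone r := monotone_of_deriv_nonneg (hr.differentiable one_ne_zero) hr'
  exact ⟨bvp_exists hκ hκL hL hc hh hr hrsign hr',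
    fun u₁ u₁' u₁'' u₂ u₂' u₂'' h₁ h₂ => bvp_uniq hκ hκL hL hh hmono h₁ h₂⟩
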